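/- Every n-vertex graph G that has a layered ℓ-separator has track number at most 3ℓ⌈log_{3/2} n⌉ + 3ℓ. -/

import Mathlib

namespace TLaux

/-- Interpret `f 0, …, f (m-1)` as a number, `f 0` most significant. -/
def natOfBits (f : ℕ → Bool) : ℕ → ℕ
  | 0 => 0
  | m + 1 => 2 * natOfBits f m + (f m).toNat

lemma natOfBits_lt (f : ℕ → Bool) (m : ℕ) : natOfBits f m < 2 ^ m := by
  induction m with
  | zero => simp [natOfBits]
  | succ m ih =>
    have h1 : (f m).toNat ≤ 1 := by cases f m <;> simp
    simp only [natOfBits, pow_succ]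
    omega

lemma natOfBits_congr {f g : ℕ → Bool} (m : ℕ) (h : ∀ k < m, f k = g k) :
    natOfBits f m = natOfBits g m := by
  induction m with
  | zero => rfl
  | succ m ih =>
    simp only [natOfBits]
    rw [ih (fun k hk => h k (hk.trans m.lt_succ_self)), h m m.lt_succ_self]

lemma natOfBits_lt_of {f g : ℕ → Bool} {j : ℕ} (h : ∀ k < j, f k = g k)
    (hf : f j = false) (hg : g j = true) :
    ∀ m, j < m → natOfBits f m < natOfBits g m := by
  intro m
  induction m with
  | zero => omega
  | succ m ih =>
    intro hj
    rcases Nat.lt_succ_iff_lt_or_eq.mp hj with h' | h'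
    · have := ih h'
      have h1 : (f m).toNat ≤ 1 := by cases f m <;> simp
      simp only [natOfBits]
      omega
    · subst h'
      simp only [natOfBits, natOfBits_congr j h, hf, hg, Bool.toNat_false, Bool.toNat_true]
      omega

lemma exists_firstDiff {f g : ℕ → Bool} {m : ℕ} (h : natOfBits f m < natOfBits g m) :
    ∃ j < m, (∀ k < j, f k = g k) ∧ f j = false ∧ g j = true := by
  classical
  have hne : ∃ k, k < m ∧ f k ≠ g k := by
    by_contra hc
    push_neg at hc
    rw [natOfBits_congr m hc] at h
    exact lt_irrefl _ h
  obtain ⟨hjm, hjne⟩ := Nat.find_spec hne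
  set j := Nat.find hne with hjdef
  have hagree : ∀ k < j, f k = g k := by
    intro k hk
    by_contra hk'
    exact Nat.find_min hne hk ⟨hk.trans hjm, hk'⟩
  cases hf : f j <;> cases hg : g j
  · exact absurd (hf.trans hg.symm) hjne
  · exact ⟨j, hjm, hagree, hf, hg⟩
  · have := natOfBits_lt_of (fun k hk => (hagree k hk).symm) hg hf _ hjm
    omega
  · exact absurd (hf.trans hg.symm) hjne

lemma eq_bits_of_natOfBits_eq {f g : ℕ → Bool} {m : ℕ} (h : natOfBits f m = natOfBits g m) :
    ∀ k < m, f k = g k := by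
  classical
  by_contra hc
  push_neg at hc
  obtain ⟨k0, hk0, hne0⟩ := hc
  have hne : ∃ k, k < m ∧ f k ≠ g k := ⟨k0, hk0, hne0⟩
  obtain ⟨hjm, hjne⟩ := Nat.find_spec hne
  set j := Nat.find hne with hjdef
  have hagree : ∀ k < j, f k = g k := by
    intro k hk
    by_contra hk'
    exact Nat.find_min hne hk ⟨hk.trans hjm, hk'⟩
  cases hf : f j <;> cases hg : g j
  · exact absurd (hf.trans hg.symm) hjne
  · have := natOfBits_lt_of hagree hf hg _ hjm
    omega
  · have := natOfBits_lt_of (fun k hk => (hagree k hk).symm) hg hf _ hjm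
    omega
  · exact absurd (hf.trans hg.symm) hjne

variable {V : Type*} [DecidableEq V] [Fintype V]

/-- The recursively separated piece containing (or having contained) `v` at depth `d`. -/
def setAt (f1 f2 : Finset V → Finset V) (v : V) : ℕ → Finset V
  | 0 => Finset.univ
  | d + 1 =>
    let s := setAt f1 f2 v d
    if v ∈ f2 s \ f1 s then f2 s \ f1 s else f1 s \ f2 s

/-- The branch taken by `v` at depth `d`. -/
def bitOf (f1 f2 : Finset V → Finset V) (v : V) (d : ℕ) : Bool :=
  decide (v ∈ f2 (setAt f1 f2 v d) \ f1 (setAt f1 f2 v d))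

lemma setAt_succ (f1 f2 : Finset V → Finset V) (v : V) (d : ℕ) :
    setAt f1 f2 v (d + 1) =
      if bitOf f1 f2 v d then f2 (setAt f1 f2 v d) \ f1 (setAt f1 f2 v d)
      else f1 (setAt f1 f2 v d) \ f2 (setAt f1 f2 v d) := by
  simp [setAt, bitOf]

lemma setAt_congr (f1 f2 : Finset V → Finset V) {v x : V} (d : ℕ)
    (h : ∀ k < d, bitOf f1 f2 v k = bitOf f1 f2 x k) :
    setAt f1 f2 v d = setAt f1 f2 x d := by
  induction d with
  | zero => rfl
  | succ d ih =>
    have hs := ih (fun k hk => h k (hk.trans d.lt_succ_self))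
    rw [setAt_succ, setAt_succ, hs, h d d.lt_succ_self]

end TLaux


/-- A `t`-track layout of `G`: `track` is a proper colouring with colours `< t`,
`ord` induces a total order on each track (injective within each track),
and there are no X-crossings. -/
def IsTrackLayout {V : Type*} (G : SimpleGraph V) (track ord : V → ℕ) (t : ℕ) : Prop :=
  (∀ v, track v < t) ∧
  (∀ ⦃v w⦄, G.Adj v w → track v ≠ track w) ∧
  (∀ ⦃v w⦄, track v = track w → ord v = ord w → v = w) ∧
  (∀ ⦃v w x y⦄, G.Adj v w → G.Adj x y → track v = track x → track w = track y →
      track v ≠ track w → ord v < ord x → ord y < ord w → False)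

/-- `G` has track number at most `t`. -/
def TrackNumberLE {V : Type*} (G : SimpleGraph V) (t : ℕ) : Prop :=
  ∃ track ord : V → ℕ, IsTrackLayout G track ord t

/-- Every `n`-vertex graph `G` that has a layered `ℓ`-separator (with respect to
a layering `L`, every (induced) subgraph of `G` has a separation whose separator
has at most `ℓ` vertices in each layer and whose sides each have at most `2/3`
of the vertices) has track number at most `3ℓ⌈log_{3/2} n⌉ + 3ℓ`. -/
theorem track_number_of_layered_separator {V : Type*} [Fintype V] [DecidableEq V]
    (G : SimpleGraph V) (ℓ : ℕ) (hℓ : 1 ≤ ℓ) (L : V → ℕ)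
    (hlayering : ∀ ⦃v w⦄, G.Adj v w → L v ≤ L w + 1 ∧ L w ≤ L v + 1)
    (hsep : ∀ s : Finset V, ∃ s₁ s₂ : Finset V, s₁ ∪ s₂ = s ∧
      (∀ v ∈ s₁ \ s₂, ∀ w ∈ s₂ \ s₁, ¬ G.Adj v w) ∧
      (∀ i : ℕ, ((s₁ ∩ s₂).filter (fun v => L v = i)).card ≤ ℓ) ∧
      3 * (s₁ \ s₂).card ≤ 2 * s.card ∧ 3 * (s₂ \ s₁).card ≤ 2 * s.card) :
    TrackNumberLE G
      (3 * ℓ * ⌈Real.logb (3 / 2) (Fintype.card V)⌉₊ + 3 * ℓ) := by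
  classical
  choose f1 f2 hun hna hsc hc1 hc2 using hsep
  set n : ℕ := Fintype.card V with hn
  set D : ℕ := ⌈Real.logb (3 / 2) (n : ℝ)⌉₊ with hD
  -- basic facts about the recursion
  have hmem : ∀ (v : V) (d : ℕ),
      (∀ e < d, v ∉ f1 (TLaux.setAt f1 f2 v e) ∩ f2 (TLaux.setAt f1 f2 v e)) →
      v ∈ TLaux.setAt f1 f2 v d := by
    intro v d
    induction d with
    | zero => intro _; simp [TLaux.setAt]
    | succ d ih =>
      intro h
      have hvd : v ∈ TLaux.setAt f1 f2 v d := ih (fun e he => h e (he.trans d.lt_succ_self))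
      have hnsep : v ∉ f1 (TLaux.setAt f1 f2 v d) ∩ f2 (TLaux.setAt f1 f2 v d) :=
        h d d.lt_succ_self
      have hcases : v ∈ f1 (TLaux.setAt f1 f2 v d) ∪ f2 (TLaux.setAt f1 f2 v d) := by
        rw [hun]; exact hvd
      rw [TLaux.setAt_succ]
      by_cases hb : TLaux.bitOf f1 f2 v d
      · rw [if_pos hb]
        exact of_decide_eq_true hb
      · rw [if_neg hb]
        have hb' : v ∉ f2 (TLaux.setAt f1 f2 v d) \ f1 (TLaux.setAt f1 f2 v d) := by
          intro hmem2
          exact hb (decide_eq_true hmem2)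
        simp only [Finset.mem_sdiff, Finset.mem_inter, Finset.mem_union, not_and, not_not] at *
        tauto
  have hshrink : ∀ (v : V) (d : ℕ),
      3 * (TLaux.setAt f1 f2 v (d + 1)).card ≤ 2 * (TLaux.setAt f1 f2 v d).card := by
    intro v d
    rw [TLaux.setAt_succ]
    by_cases hb : TLaux.bitOf f1 f2 v d
    · rw [if_pos hb]; exact hc2 _
    · rw [if_neg hb]; exact hc1 _
  have hsize : ∀ (v : V) (d : ℕ),
      3 ^ d * (TLaux.setAt f1 f2 v d).card ≤ 2 ^ d * n := by
    intro v d
    induction d with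
    | zero => simp [TLaux.setAt, hn]
    | succ d ih =>
      calc 3 ^ (d + 1) * (TLaux.setAt f1 f2 v (d + 1)).card
          = 3 ^ d * (3 * (TLaux.setAt f1 f2 v (d + 1)).card) := by ring
        _ ≤ 3 ^ d * (2 * (TLaux.setAt f1 f2 v d).card) :=
            Nat.mul_le_mul_left _ (hshrink v d)
        _ = 2 * (3 ^ d * (TLaux.setAt f1 f2 v d).card) := by ring
        _ ≤ 2 * (2 ^ d * n) := Nat.mul_le_mul_left _ ih
        _ = 2 ^ (d + 1) * n := by ring
  -- every vertex lands in a separator, at depth at most D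
  have hex : ∀ v : V, ∃ d, v ∈ f1 (TLaux.setAt f1 f2 v d) ∩ f2 (TLaux.setAt f1 f2 v d) := by
    intro v
    by_contra hc
    push_neg at hc
    have hv : v ∈ TLaux.setAt f1 f2 v (D + 1) := hmem v (D + 1) (fun e _ => hc e)
    have hcard : 1 ≤ (TLaux.setAt f1 f2 v (D + 1)).card := Finset.card_pos.mpr ⟨v, hv⟩
    have h32 : (3 : ℕ) ^ (D + 1) ≤ 2 ^ (D + 1) * n := by
      calc (3:ℕ) ^ (D+1) = 3 ^ (D+1) * 1 := by ring
        _ ≤ 3 ^ (D+1) * (TLaux.setAt f1 f2 v (D + 1)).card := Nat.mul_le_mul_left _ hcard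
        _ ≤ 2 ^ (D+1) * n := hsize v (D+1)
    have hr : ((3 : ℝ) / 2) ^ (D + 1) ≤ (n : ℝ) := by
      rw [div_pow, div_le_iff₀ (by positivity)]
      calc ((3:ℝ) ^ (D+1)) ≤ 2 ^ (D+1) * (n:ℝ) := by exact_mod_cast h32
        _ = (n:ℝ) * 2 ^ (D+1) := by ring
    have hlogb : ((D : ℝ) + 1) ≤ Real.logb (3 / 2) (n : ℝ) := by
      have h1 : Real.logb ((3:ℝ) / 2) (((3 : ℝ) / 2) ^ (D + 1)) = (D : ℝ) + 1 := by
        rw [Real.logb_pow, Real.logb_self_eq_one (by norm_num : (1:ℝ) < 3/2)]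
        push_cast; ring
      have h2 : Real.logb ((3:ℝ)/2) (((3:ℝ)/2) ^ (D+1)) ≤ Real.logb ((3:ℝ)/2) (n:ℝ) :=
        Real.logb_le_logb_of_le (by norm_num : (1:ℝ) < 3/2) (by positivity) hr
      linarith [h1 ▸ h2]
    have : D + 1 ≤ D := by
      calc D + 1 = ⌈((D : ℝ) + 1)⌉₊ := by
            rw [show ((D:ℝ)+1) = ((D+1 : ℕ) : ℝ) by push_cast; ring, Nat.ceil_natCast]
        _ ≤ ⌈Real.logb (3 / 2) (n : ℝ)⌉₊ := Nat.ceil_le_ceil hlogb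
        _ = D := hD.symm
    omega
  -- depth of each vertex
  let dep : V → ℕ := fun v => Nat.find (hex v)
  have hdep_mem : ∀ v : V,
      v ∈ f1 (TLaux.setAt f1 f2 v (dep v)) ∩ f2 (TLaux.setAt f1 f2 v (dep v)) :=
    fun v => Nat.find_spec (hex v)
  have hdep_min : ∀ (v : V) (e : ℕ), e < dep v →
      v ∉ f1 (TLaux.setAt f1 f2 v e) ∩ f2 (TLaux.setAt f1 f2 v e) :=
    fun v e he => Nat.find_min (hex v) he
  have hdepD : ∀ v : V, dep v ≤ D := by
    intro v
    by_contra hc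
    push_neg at hc
    have hv : v ∈ TLaux.setAt f1 f2 v (D + 1) :=
      hmem v (D + 1) (fun e he => hdep_min v e (lt_of_lt_of_le he hc))
    have hcard : 1 ≤ (TLaux.setAt f1 f2 v (D + 1)).card := Finset.card_pos.mpr ⟨v, hv⟩
    have h32 : (3 : ℕ) ^ (D + 1) ≤ 2 ^ (D + 1) * n := by
      calc (3:ℕ) ^ (D+1) = 3 ^ (D+1) * 1 := by ring
        _ ≤ 3 ^ (D+1) * (TLaux.setAt f1 f2 v (D + 1)).card := Nat.mul_le_mul_left _ hcard
        _ ≤ 2 ^ (D+1) * n := hsize v (D+1)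
    have hr : ((3 : ℝ) / 2) ^ (D + 1) ≤ (n : ℝ) := by
      rw [div_pow, div_le_iff₀ (by positivity)]
      calc ((3:ℝ) ^ (D+1)) ≤ 2 ^ (D+1) * (n:ℝ) := by exact_mod_cast h32
        _ = (n:ℝ) * 2 ^ (D+1) := by ring
    have hlogb : ((D : ℝ) + 1) ≤ Real.logb (3 / 2) (n : ℝ) := by
      have h1 : Real.logb ((3:ℝ) / 2) (((3 : ℝ) / 2) ^ (D + 1)) = (D : ℝ) + 1 := by
        rw [Real.logb_pow, Real.logb_self_eq_one (by norm_num : (1:ℝ) < 3/2)]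
        push_cast; ring
      have h2 : Real.logb ((3:ℝ)/2) (((3:ℝ)/2) ^ (D+1)) ≤ Real.logb ((3:ℝ)/2) (n:ℝ) :=
        Real.logb_le_logb_of_le (by norm_num : (1:ℝ) < 3/2) (by positivity) hr
      linarith [h1 ▸ h2]
    have : D + 1 ≤ D := by
      calc D + 1 = ⌈((D : ℝ) + 1)⌉₊ := by
            rw [show ((D:ℝ)+1) = ((D+1 : ℕ) : ℝ) by push_cast; ring, Nat.ceil_natCast]
        _ ≤ ⌈Real.logb (3 / 2) (n : ℝ)⌉₊ := Nat.ceil_le_ceil hlogb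
        _ = D := hD.symm
    omega
  have hmemS : ∀ (v : V) (e : ℕ), e ≤ dep v → v ∈ TLaux.setAt f1 f2 v e :=
    fun v e he => hmem v e (fun e' he' => hdep_min v e' (lt_of_lt_of_le he' he))
  -- adjacent vertices take the same branches while both are alive
  have hagree : ∀ v w : V, G.Adj v w → ∀ k, k < dep v → k < dep w →
      TLaux.bitOf f1 f2 v k = TLaux.bitOf f1 f2 w k := by
    intro v w hvw k
    induction k using Nat.strong_induction_on with
    | _ k ih =>
      intro hkv hkw
      have hsets : TLaux.setAt f1 f2 v k = TLaux.setAt f1 f2 w k :=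
        TLaux.setAt_congr f1 f2 k
          (fun j hj => ih j hj (hj.trans hkv) (hj.trans hkw))
      by_contra hne
      have hv : v ∈ TLaux.setAt f1 f2 v k := hmemS v k hkv.le
      have hw : w ∈ TLaux.setAt f1 f2 v k := hsets ▸ hmemS w k hkw.le
      have hvns : v ∉ f1 (TLaux.setAt f1 f2 v k) ∩ f2 (TLaux.setAt f1 f2 v k) :=
        hdep_min v k hkv
      have hwns : w ∉ f1 (TLaux.setAt f1 f2 v k) ∩ f2 (TLaux.setAt f1 f2 v k) := by
        rw [hsets]; exact hdep_min w k hkw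
      have hvu : v ∈ f1 (TLaux.setAt f1 f2 v k) ∪ f2 (TLaux.setAt f1 f2 v k) := by
        rw [hun]; exact hv
      have hwu : w ∈ f1 (TLaux.setAt f1 f2 v k) ∪ f2 (TLaux.setAt f1 f2 v k) := by
        rw [hun]; exact hw
      -- translate the bits
      have hbv : TLaux.bitOf f1 f2 v k =
          decide (v ∈ f2 (TLaux.setAt f1 f2 v k) \ f1 (TLaux.setAt f1 f2 v k)) := rfl
      have hbw : TLaux.bitOf f1 f2 w k =
          decide (w ∈ f2 (TLaux.setAt f1 f2 v k) \ f1 (TLaux.setAt f1 f2 v k)) := by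
        rw [TLaux.bitOf, hsets]
      set s := TLaux.setAt f1 f2 v k with hsdef
      cases hbvv : TLaux.bitOf f1 f2 v k <;> cases hbww : TLaux.bitOf f1 f2 w k
      · exact hne (hbvv.trans hbww.symm)
      · -- v on side 1, w on side 2
        have hv2 : v ∉ f2 s \ f1 s := by
          intro hx; rw [hbv, decide_eq_true hx] at hbvv; cases hbvv
        have hw2 : w ∈ f2 s \ f1 s := by
          rw [hbw] at hbww; exact of_decide_eq_true hbww
        have hv1 : v ∈ f1 s \ f2 s := by
          simp only [Finset.mem_sdiff, Finset.mem_inter, Finset.mem_union, not_and,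
            not_not] at hvu hvns hv2 ⊢
          tauto
        exact hna s v hv1 w hw2 hvw
      · -- w on side 1, v on side 2
        have hw2 : w ∉ f2 s \ f1 s := by
          intro hx; rw [hbw, decide_eq_true hx] at hbww; cases hbww
        have hv2 : v ∈ f2 s \ f1 s := by
          rw [hbv] at hbvv; exact of_decide_eq_true hbvv
        have hw1 : w ∈ f1 s \ f2 s := by
          simp only [Finset.mem_sdiff, Finset.mem_inter, Finset.mem_union, not_and,
            not_not] at hwu hwns hw2 ⊢
          tauto
        exact hna s w hw1 v hv2 hvw.symm
      · exact hne (hbvv.trans hbww.symm)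
  -- position inside the separator piece and layer
  let ι : V → ℕ := fun u => ((Fintype.equivFin V) u : ℕ)
  have hιinj : ∀ u u' : V, ι u = ι u' → u = u' := by
    intro u u' h
    exact (Fintype.equivFin V).injective (Fin.val_injective h)
  let sep : V → Finset V :=
    fun v => f1 (TLaux.setAt f1 f2 v (dep v)) ∩ f2 (TLaux.setAt f1 f2 v (dep v))
  let pos : V → ℕ := fun v => ((sep v).filter (fun u => L u = L v ∧ ι u < ι v)).card
  have hv_sep : ∀ v : V, v ∈ sep v := hdep_mem
  have hpos_lt : ∀ v : V, pos v < ℓ := by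
    intro v
    have hsub : (sep v).filter (fun u => L u = L v ∧ ι u < ι v) ⊆
        (sep v).filter (fun u => L u = L v) :=
      by intro u hu; simp only [Finset.mem_filter] at hu ⊢; exact ⟨hu.1, hu.2.1⟩
    have hvin : v ∈ (sep v).filter (fun u => L u = L v) :=
      Finset.mem_filter.mpr ⟨hv_sep v, rfl⟩
    have hvnot : v ∉ (sep v).filter (fun u => L u = L v ∧ ι u < ι v) := by
      intro hx
      exact lt_irrefl _ (Finset.mem_filter.mp hx).2.2
    have hlt : ((sep v).filter (fun u => L u = L v ∧ ι u < ι v)).card <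
        ((sep v).filter (fun u => L u = L v)).card :=
      Finset.card_lt_card ⟨hsub, fun hall => hvnot (hall hvin)⟩
    exact lt_of_lt_of_le hlt (hsc _ (L v))
  have hpos_inj : ∀ v x : V,
      TLaux.setAt f1 f2 v (dep v) = TLaux.setAt f1 f2 x (dep x) →
      L v = L x → pos v = pos x → v = x := by
    have hmono : ∀ a c : V,
        TLaux.setAt f1 f2 a (dep a) = TLaux.setAt f1 f2 c (dep c) →
        L a = L c → ι a < ι c → pos a < pos c := by
      intro a c hse hLe hlt
      have hsep_eq : sep a = sep c := by
        show f1 _ ∩ f2 _ = f1 _ ∩ f2 _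
        rw [hse]
      apply Finset.card_lt_card
      constructor
      · intro u hu
        obtain ⟨husep, hLu, hιu⟩ := Finset.mem_filter.mp hu
        refine Finset.mem_filter.mpr ⟨hsep_eq ▸ husep, ?_, hιu.trans hlt⟩
        rw [hLu, hLe]
      · intro hall
        have ha : a ∈ (sep c).filter (fun u => L u = L c ∧ ι u < ι c) :=
          Finset.mem_filter.mpr ⟨hsep_eq ▸ hv_sep a, hLe, hlt⟩
        have := Finset.mem_filter.mp (hall ha)
        exact lt_irrefl _ this.2.2
    intro v x hs hL hp
    by_contra hvx
    have hι : ι v ≠ ι x := fun h => hvx (hιinj _ _ h)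
    rcases lt_or_gt_of_ne hι with h | h
    · exact absurd hp (Nat.ne_of_lt (hmono v x hs hL h))
    · exact absurd hp.symm (Nat.ne_of_lt (hmono x v hs.symm hL.symm h))
  -- track and order
  let σ : V → ℕ := fun v => TLaux.natOfBits (TLaux.bitOf f1 f2 v) (D + 1)
  have hσlt : ∀ v : V, σ v < 2 ^ (D + 1) := fun v => TLaux.natOfBits_lt _ _
  let track : V → ℕ := fun v => dep v * (3 * ℓ) + (L v % 3) * ℓ + pos v
  let ord : V → ℕ := fun v => L v * 2 ^ (D + 1) + σ v
  -- decoding lemmas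
  have hdiv : ∀ q p : ℕ, p < ℓ → (q * ℓ + p) / ℓ = q := by
    intro q p hp
    rw [mul_comm, Nat.mul_add_div (by omega), Nat.div_eq_of_lt hp, Nat.add_zero]
  have hmod : ∀ q p : ℕ, p < ℓ → (q * ℓ + p) % ℓ = p := by
    intro q p hp
    rw [mul_comm, Nat.mul_add_mod, Nat.mod_eq_of_lt hp]
  have hq : ∀ q p q' p' : ℕ, p < ℓ → p' < ℓ → q * ℓ + p = q' * ℓ + p' → q = q' ∧ p = p' := by
    intro q p q' p' hp hp' h
    constructor
    · rw [← hdiv q p hp, ← hdiv q' p' hp', h]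
    · rw [← hmod q p hp, ← hmod q' p' hp', h]
  have htrk : ∀ v w : V, track v = track w →
      dep v = dep w ∧ L v % 3 = L w % 3 ∧ pos v = pos w := by
    intro v w h
    have hv3 : L v % 3 < 3 := Nat.mod_lt _ (by norm_num)
    have hw3 : L w % 3 < 3 := Nat.mod_lt _ (by norm_num)
    have h' : (3 * dep v + L v % 3) * ℓ + pos v = (3 * dep w + L w % 3) * ℓ + pos w := by
      have e1 : track v = (3 * dep v + L v % 3) * ℓ + pos v := by
        show dep v * (3 * ℓ) + (L v % 3) * ℓ + pos v = _
        ring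
      have e2 : track w = (3 * dep w + L w % 3) * ℓ + pos w := by
        show dep w * (3 * ℓ) + (L w % 3) * ℓ + pos w = _
        ring
      rw [← e1, ← e2, h]
    obtain ⟨hq1, hq2⟩ := hq _ _ _ _ (hpos_lt v) (hpos_lt w) h'
    refine ⟨?_, ?_, hq2⟩ <;> omega
  have hordlex : ∀ v w : V, ord v < ord w → L v < L w ∨ (L v = L w ∧ σ v < σ w) := by
    intro v w h
    have h1 : ord v = L v * 2 ^ (D+1) + σ v := rfl
    have h2 : ord w = L w * 2 ^ (D+1) + σ w := rfl
    rcases lt_trichotomy (L v) (L w) with hc | hc | hc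
    · exact Or.inl hc
    · refine Or.inr ⟨hc, ?_⟩
      rw [h1, h2, hc] at h
      exact Nat.lt_of_add_lt_add_left h
    · exfalso
      have : ord w < ord v := by
        rw [h1, h2]
        calc L w * 2 ^ (D+1) + σ w < L w * 2 ^ (D+1) + 2 ^ (D+1) :=
              Nat.add_lt_add_left (hσlt w) _
          _ = (L w + 1) * 2 ^ (D+1) := by ring
          _ ≤ L v * 2 ^ (D+1) := Nat.mul_le_mul_right _ (by omega)
          _ ≤ L v * 2 ^ (D+1) + σ v := Nat.le_add_right _ _
      omega
  -- vertices in the same track with the same σ and layer coincide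
  have hsame : ∀ v x : V, dep v = dep x → L v = L x → pos v = pos x →
      (∀ k < dep v, TLaux.bitOf f1 f2 v k = TLaux.bitOf f1 f2 x k) → v = x := by
    intro v x hdep hL hp hbits
    have hsets : TLaux.setAt f1 f2 v (dep v) = TLaux.setAt f1 f2 x (dep x) := by
      rw [← hdep]
      exact TLaux.setAt_congr f1 f2 _ hbits
    exact hpos_inj v x hsets hL hp
  refine ⟨track, ord, ?_, ?_, ?_, ?_⟩
  · -- bound on the number of tracks
    intro v
    show dep v * (3 * ℓ) + (L v % 3) * ℓ + pos v < 3 * ℓ * D + 3 * ℓ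
    have h1 : dep v ≤ D := hdepD v
    have h2 : L v % 3 ≤ 2 := by omega
    have h3 : pos v < ℓ := hpos_lt v
    calc dep v * (3 * ℓ) + (L v % 3) * ℓ + pos v
        < dep v * (3 * ℓ) + (L v % 3) * ℓ + ℓ := by omega
      _ ≤ D * (3 * ℓ) + 2 * ℓ + ℓ := by
          have := Nat.mul_le_mul_right (3 * ℓ) h1
          have := Nat.mul_le_mul_right ℓ h2
          omega
      _ = 3 * ℓ * D + 3 * ℓ := by ring
  · -- proper colouring
    intro v w hvw h
    obtain ⟨hdep, hmod, hp⟩ := htrk v w h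
    have hlay := hlayering hvw
    have hL : L v = L w := by omega
    have hbits : ∀ k < dep v, TLaux.bitOf f1 f2 v k = TLaux.bitOf f1 f2 w k :=
      fun k hk => hagree v w hvw k hk (hdep ▸ hk)
    exact hvw.ne (hsame v w hdep hL hp hbits)
  · -- injectivity within a track
    intro v w htr hod
    obtain ⟨hdep, _, hp⟩ := htrk v w htr
    have h1 : ord v = L v * 2 ^ (D+1) + σ v := rfl
    have h2 : ord w = L w * 2 ^ (D+1) + σ w := rfl
    have hL : L v = L w := by
      rcases lt_trichotomy (L v) (L w) with hc | hc | hc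
      · exfalso
        have hlt : ord v < ord w := by
          rw [h1, h2]
          calc L v * 2 ^ (D+1) + σ v < L v * 2 ^ (D+1) + 2 ^ (D+1) :=
                Nat.add_lt_add_left (hσlt v) _
            _ = (L v + 1) * 2 ^ (D+1) := by ring
            _ ≤ L w * 2 ^ (D+1) := Nat.mul_le_mul_right _ (by omega)
            _ ≤ L w * 2 ^ (D+1) + σ w := Nat.le_add_right _ _
        omega
      · exact hc
      · exfalso
        have hlt : ord w < ord v := by
          rw [h1, h2]
          calc L w * 2 ^ (D+1) + σ w < L w * 2 ^ (D+1) + 2 ^ (D+1) :=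
                Nat.add_lt_add_left (hσlt w) _
            _ = (L w + 1) * 2 ^ (D+1) := by ring
            _ ≤ L v * 2 ^ (D+1) := Nat.mul_le_mul_right _ (by omega)
            _ ≤ L v * 2 ^ (D+1) + σ v := Nat.le_add_right _ _
        omega
    have hσ : σ v = σ w := by
      rw [h1, h2, hL] at hod
      omega
    have hbits : ∀ k < dep v, TLaux.bitOf f1 f2 v k = TLaux.bitOf f1 f2 w k := by
      intro k hk
      exact TLaux.eq_bits_of_natOfBits_eq hσ k (lt_of_lt_of_le hk (by
        have := hdepD v
        omega))
    exact hsame v w hdep hL hp hbits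
  · -- no X-crossing
    intro v w x y hvw hxy htvx htwy htvw hovx hoyw
    obtain ⟨hdvx, hmvx, hpvx⟩ := htrk v x htvx
    obtain ⟨hdwy, hmwy, hpwy⟩ := htrk w y htwy
    have hlay1 := hlayering hvw
    have hlay2 := hlayering hxy
    have hlex1 := hordlex v x hovx
    have hlex2 := hordlex y w hoyw
    have hLvx : L v ≤ L x := by rcases hlex1 with h | h <;> omega
    have hLyw : L y ≤ L w := by rcases hlex2 with h | h <;> omega
    -- layer inequalities kill the cases where layers differ
    have hLv : L v = L x := by
      by_contra hne
      have h3 : L v + 3 ≤ L x := by omega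
      omega
    have hLy : L y = L w := by
      by_contra hne
      have h3 : L y + 3 ≤ L w := by omega
      omega
    have hσvx : σ v < σ x := by
      rcases hlex1 with h | h
      · omega
      · exact h.2
    have hσyw : σ y < σ w := by
      rcases hlex2 with h | h
      · omega
      · exact h.2
    -- first differing bits
    obtain ⟨j, hjD, hjag, hjv, hjx⟩ := TLaux.exists_firstDiff hσvx
    obtain ⟨j', hj'D, hj'ag, hj'y, hj'w⟩ := TLaux.exists_firstDiff hσyw
    have hji : j < dep v := by
      by_contra hc
      push_neg at hc
      have hbits : ∀ k < dep v, TLaux.bitOf f1 f2 v k = TLaux.bitOf f1 f2 x k :=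
        fun k hk => hjag k (lt_of_lt_of_le hk hc)
      have : v = x := hsame v x hdvx hLv hpvx hbits
      subst this
      exact absurd hjv (by rw [hjx]; simp)
    have hj'i : j' < dep y := by
      by_contra hc
      push_neg at hc
      have hbits : ∀ k < dep y, TLaux.bitOf f1 f2 y k = TLaux.bitOf f1 f2 w k :=
        fun k hk => hj'ag k (lt_of_lt_of_le hk hc)
      have : y = w := hsame y w hdwy.symm hLy hpwy.symm hbits
      subst this
      exact absurd hj'y (by rw [hj'w]; simp)
    by_cases hcase : j < dep w
    · -- transfer the difference at j to the pair (w, y)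
      have hjdv : j < dep v := hji
      have hjdx : j < dep x := hdvx ▸ hjdv
      have hjdy : j < dep y := hdwy ▸ hcase
      have hwj : TLaux.bitOf f1 f2 w j = false := by
        rw [← hagree v w hvw j hjdv hcase]
        exact hjv
      have hyj : TLaux.bitOf f1 f2 y j = true := by
        rw [← hagree x y hxy j hjdx hjdy]
        exact hjx
      have hagwy : ∀ k < j, TLaux.bitOf f1 f2 w k = TLaux.bitOf f1 f2 y k := by
        intro k hk
        have hkv : k < dep v := hk.trans hjdv
        have hkw : k < dep w := hk.trans hcase
        have hkx : k < dep x := hk.trans hjdx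
        have hky : k < dep y := hk.trans hjdy
        rw [← hagree v w hvw k hkv hkw, hjag k hk, hagree x y hxy k hkx hky]
      have : σ w < σ y := TLaux.natOfBits_lt_of hagwy hwj hyj (D + 1) hjD
      omega
    · -- dep w ≤ j < dep v ; use the difference at j' < dep w
      push_neg at hcase
      have hj'w2 : j' < dep w := hdwy.symm ▸ hj'i
      have hj'v : j' < dep v := lt_of_lt_of_le hj'w2 (le_trans hcase hji.le)
      have hj'x : j' < dep x := hdvx ▸ hj'v
      have hj'lt : j' < j := lt_of_lt_of_le hj'w2 hcase
      have h1 : TLaux.bitOf f1 f2 v j' = TLaux.bitOf f1 f2 x j' := hjag j' hj'lt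
      have h2 : TLaux.bitOf f1 f2 w j' = TLaux.bitOf f1 f2 v j' :=
        (hagree v w hvw j' hj'v hj'w2).symm
      have h3 : TLaux.bitOf f1 f2 y j' = TLaux.bitOf f1 f2 x j' :=
        (hagree x y hxy j' hj'x hj'i).symm
      rw [hj'w] at h2
      rw [hj'y] at h3
      rw [← h1, ← h2] at h3
      cases h3
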